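/- Let D = (V,A) be a digraph in which at most one vertex has in-degree 0, and if such a vertex r exists, suppose r ∈ V₁'. Let (V₁', V₂') be disjoint subsets of V such that D[V₁'] has an out-branching and every vertex of D[V₂'] has in-degree at least 1 in D[V₂']. Then there exists a partition (V₁, V₂) of V with V₁' ⊆ V₁, V₂' ⊆ V₂, such that D[V₁] has an out-branching and every vertex of D[V₂] has in-degree at least 1 in D[V₂]. -/

import Mathlib

/-- The induced subdigraph `D[S]` has an out-branching rooted at `r`. -/
def HasOutBranchingFrom {V : Type*} (A : V → V → Prop) (S : Set V) (r : V) : Prop :=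
  r ∈ S ∧ ∃ T : V → V → Prop,
    (∀ u v, T u v → A u v ∧ u ∈ S ∧ v ∈ S) ∧
    (∀ u, ¬ T u r) ∧
    (∀ v ∈ S, v ≠ r → ∃! u, T u v) ∧
    (∀ v ∈ S, Relation.ReflTransGen (fun x y => T x y ∨ T y x) r v)

/-- The induced subdigraph `D[S]` has an out-branching. -/
def HasOutBranching {V : Type*} (A : V → V → Prop) (S : Set V) : Prop :=
  ∃ r, HasOutBranchingFrom A S r

lemma extend_branching {V : Type*} (A : V → V → Prop) (S : Set V) (r u v : V)
    (h : HasOutBranchingFrom A S r) (hu : u ∈ S) (hv : v ∉ S) (ha : A u v) :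
    HasOutBranchingFrom A (insert v S) r := by
  obtain ⟨hr, T, hT1, hT2, hT3, hT4⟩ := h
  refine ⟨Set.mem_insert_of_mem _ hr, fun x y => T x y ∨ (x = u ∧ y = v), ?_, ?_, ?_, ?_⟩
  · rintro x y (hxy | ⟨rfl, rfl⟩)
    · obtain ⟨h1, h2, h3⟩ := hT1 x y hxy
      exact ⟨h1, Set.mem_insert_of_mem _ h2, Set.mem_insert_of_mem _ h3⟩
    · exact ⟨ha, Set.mem_insert_of_mem _ hu, Set.mem_insert _ _⟩
  · rintro x (hx | ⟨rfl, rfl⟩)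
    · exact hT2 x hx
    · exact hv hr
  · rintro w hw hwr
    rcases hw with rfl | hw
    · refine ⟨u, Or.inr ⟨rfl, rfl⟩, ?_⟩
      rintro x (hx | ⟨rfl, -⟩)
      · exact absurd (hT1 x w hx).2.2 hv
      · rfl
    · obtain ⟨p, hp, hpu⟩ := hT3 w hw hwr
      refine ⟨p, Or.inl hp, ?_⟩
      rintro x (hx | ⟨rfl, rfl⟩)
      · exact hpu x hx
      · exact absurd hw hv
  · have lift : ∀ w ∈ S, Relation.ReflTransGen
        (fun x y => (T x y ∨ (x = u ∧ y = v)) ∨ (T y x ∨ (y = u ∧ x = v))) r w := by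
      intro w hw
      refine Relation.ReflTransGen.mono ?_ r w (hT4 w hw)
      rintro x y (h | h)
      · exact Or.inl (Or.inl h)
      · exact Or.inr (Or.inl h)
    rintro w (rfl | hw)
    · exact (lift u hu).tail (Or.inl (Or.inr ⟨rfl, rfl⟩))
    · exact lift w hw

lemma key {V : Type*} [Fintype V] (n : ℕ) (A : V → V → Prop) (V₁' V₂' : Set V)
    (hn : (V₁' ∪ V₂')ᶜ.ncard ≤ n)
    (hdisj : Disjoint V₁' V₂')
    (hzero : ∀ v : V, (∀ u, ¬ A u v) → v ∈ V₁')
    (hB : HasOutBranching A V₁')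
    (hδ : ∀ v ∈ V₂', ∃ u ∈ V₂', A u v) :
    ∃ V₁ V₂ : Set V, V₁' ⊆ V₁ ∧ V₂' ⊆ V₂ ∧ Disjoint V₁ V₂ ∧ V₁ ∪ V₂ = Set.univ ∧
      HasOutBranching A V₁ ∧ ∀ v ∈ V₂, ∃ u ∈ V₂, A u v := by
  induction n generalizing V₁' with
  | zero =>
    have hempty : (V₁' ∪ V₂')ᶜ = ∅ := by
      have := Set.ncard_eq_zero (Set.toFinite _) |>.mp (Nat.le_zero.mp hn)
      exact this
    have huniv : V₁' ∪ V₂' = Set.univ := by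
      rw [← Set.compl_empty, ← hempty, compl_compl]
    exact ⟨V₁', V₂', subset_rfl, subset_rfl, hdisj, huniv, hB, hδ⟩
  | succ n ih =>
    by_cases hex : ∃ v, v ∉ V₁' ∪ V₂' ∧ ∃ u ∈ V₁', A u v
    · obtain ⟨v, hv, u, hu, ha⟩ := hex
      have hv1 : v ∉ V₁' := fun h => hv (Or.inl h)
      have hv2 : v ∉ V₂' := fun h => hv (Or.inr h)
      obtain ⟨r, hbr⟩ := hB
      have hB' : HasOutBranching A (insert v V₁') :=
        ⟨r, extend_branching A V₁' r u v hbr hu hv1 ha⟩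
      have hdisj' : Disjoint (insert v V₁') V₂' := by
        rw [Set.disjoint_left]
        rintro x (rfl | hx)
        · exact hv2
        · exact Set.disjoint_left.mp hdisj hx
      have hcompl : (insert v V₁' ∪ V₂')ᶜ = (V₁' ∪ V₂')ᶜ \ {v} := by
        ext x
        simp only [Set.mem_compl_iff, Set.mem_union, Set.mem_insert_iff, Set.mem_diff,
          Set.mem_singleton_iff]
        tauto
      have hn' : (insert v V₁' ∪ V₂')ᶜ.ncard ≤ n := by
        rw [hcompl]
        have hvmem : v ∈ (V₁' ∪ V₂')ᶜ := hv
        have := Set.ncard_diff_singleton_add_one hvmem (Set.toFinite _)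
        omega
      obtain ⟨V₁, V₂, h1, h2, h3, h4, h5, h6⟩ := ih (insert v V₁') hn' hdisj'
        (fun w hw => Set.mem_insert_of_mem _ (hzero w hw)) hB'
      exact ⟨V₁, V₂, (Set.subset_insert _ _).trans h1, h2, h3, h4, h5, h6⟩
    · push_neg at hex
      refine ⟨V₁', V₁'ᶜ, subset_rfl, ?_, disjoint_compl_right, Set.union_compl_self _, hB, ?_⟩
      · exact Set.subset_compl_iff_disjoint_left.mpr hdisj
      · intro v hv
        have hvn : ∃ u, A u v := by
          by_contra h
          push_neg at h
          exact hv (hzero v h)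
        by_cases hv2 : v ∈ V₂'
        · obtain ⟨u, hu, ha⟩ := hδ v hv2
          exact ⟨u, Set.subset_compl_iff_disjoint_left.mpr hdisj hu, ha⟩
        · obtain ⟨u, ha⟩ := hvn
          have : u ∉ V₁' := fun hu => hex v (by rintro (h | h); exacts [hv h, hv2 h]) u hu ha
          exact ⟨u, this, ha⟩

theorem stmt_4 {V : Type*} [Fintype V] (A : V → V → Prop) (V₁' V₂' : Set V)
    (hdisj : Disjoint V₁' V₂')
    (hone : ∀ v w : V, (∀ u, ¬ A u v) → (∀ u, ¬ A u w) → v = w)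
    (hzero : ∀ v : V, (∀ u, ¬ A u v) → v ∈ V₁')
    (hB : HasOutBranching A V₁')
    (hδ : ∀ v ∈ V₂', ∃ u ∈ V₂', A u v) :
    ∃ V₁ V₂ : Set V, V₁' ⊆ V₁ ∧ V₂' ⊆ V₂ ∧ Disjoint V₁ V₂ ∧ V₁ ∪ V₂ = Set.univ ∧
      HasOutBranching A V₁ ∧ ∀ v ∈ V₂, ∃ u ∈ V₂, A u v :=
  key ((V₁' ∪ V₂')ᶜ.ncard) A V₁' V₂' le_rfl hdisj hzero hB hδ
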